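/- Let n ≥ 1, let N ≡ 2 (mod 4) with N ≥ 6, and let μ ∈ ℤ^n. Then Σ_{λ∈X_N} q^{(λ,λ)} S'_{λ,μ} = 2^n · Σ_{λ∈X_{N/2}} q^{(λ,λ)} S'_{λ,μ}, where throughout q^r = exp(2πi r/N). -/

import Mathlib

open Complex Finset

/-- `qp N r = exp(2πi r / N)`, i.e. `q^r` for `q = exp(2πi/N)`. -/
noncomputable def qp (N : ℕ) (r : ℚ) : ℂ :=
  Complex.exp (2 * (Real.pi : ℂ) * Complex.I * (r : ℂ) / (N : ℂ))

/-- The Weyl vector of `osp(1|2n)`: `ρ_j = n - j + 1/2` for `j = 1, …, n`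
(0-indexed: `ρ j = n - j - 1/2`). -/
def rhoV (n : ℕ) : Fin n → ℚ := fun j => (n : ℚ) - (j : ℚ) - 1/2

/-- The standard dot product on `ℚ^n`. -/
def dotp {n : ℕ} (x y : Fin n → ℚ) : ℚ := ∑ j, x j * y j

/-- Coercion of an integer vector to a rational vector. -/
def intC {n : ℕ} (lam : Fin n → ℤ) : Fin n → ℚ := fun j => (lam j : ℚ)

/-- Coercion of an element of `X_M = {0,…,M-1}^n` to a rational vector. -/
def finC {n M : ℕ} (mu : Fin n → Fin M) : Fin n → ℚ := fun j => ((mu j : ℕ) : ℚ)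

/-- The `j`-th standard basis vector of `ℚ^n`. -/
def stdB (n : ℕ) (j : Fin n) : Fin n → ℚ := fun l => if l = j then 1 else 0

/-- The hyperoctahedral group (Weyl group of `osp(1|2n)`): a permutation with signs. -/
abbrev HypOct (n : ℕ) := Equiv.Perm (Fin n) × (Fin n → ℤˣ)

/-- Action of the hyperoctahedral group on `ℚ^n` by signed permutation of coordinates. -/
def Wact {n : ℕ} (σ : HypOct n) (x : Fin n → ℚ) : Fin n → ℚ :=
  fun j => ((σ.2 j : ℤ) : ℚ) * x (σ.1⁻¹ j)

/-- `ε'(σ) = sgn(π) · ∏_j s_j` for `σ = (π, s)`. -/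
def epsW {n : ℕ} (σ : HypOct n) : ℤˣ :=
  Equiv.Perm.sign σ.1 * ∏ j, σ.2 j

/-- `S'_{λ,μ} = Σ_{σ∈W} ε'(σ) q^{2(λ+ρ, σ(μ+ρ))}` (for rational vectors `λ, μ`). -/
noncomputable def Sprime (n N : ℕ) (lam mu : Fin n → ℚ) : ℂ :=
  ∑ σ : HypOct n,
    ((epsW σ : ℤ) : ℂ) * qp N (2 * dotp (lam + rhoV n) (Wact σ (mu + rhoV n)))

/-- `Q_μ = Σ_{σ∈W} ε'(σ) q^{2(ρ, σ(μ+ρ))}`. -/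
noncomputable def Qmu (n N : ℕ) (mu : Fin n → ℤ) : ℂ :=
  ∑ σ : HypOct n,
    ((epsW σ : ℤ) : ℂ) * qp N (2 * dotp (rhoV n) (Wact σ (intC mu + rhoV n)))

/-- Gauss sum `G(N,m) = Σ_{j=0}^{N-1} q^{j(j+m)}` with `q = exp(2πi/N)`. -/
noncomputable def GaussG (N : ℕ) (m : ℤ) : ℂ :=
  ∑ j : Fin N, qp N ((j : ℚ) * ((j : ℚ) + (m : ℚ)))

/-- `Σ_{μ ∈ X_M} q^{(μ, μ+2ρ)}` where `q = exp(2πi/N)`. -/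
noncomputable def sumX (n N M : ℕ) : ℂ :=
  ∑ mu : Fin n → Fin M, qp N (dotp (finC mu) (finC mu + 2 • rhoV n))

/-- `Σ_{λ ∈ X_M} q^{(λ,λ)} S'_{λ,μ}` where `q = exp(2πi/N)`. -/
noncomputable def sumXS (n N M : ℕ) (mu : Fin n → ℤ) : ℂ :=
  ∑ lam : Fin n → Fin M, qp N (dotp (finC lam) (finC lam)) * Sprime n N (finC lam) (intC mu)

lemma qp_add (N : ℕ) (r s : ℚ) : qp N (r + s) = qp N r * qp N s := by
  rw [qp, qp, qp, ← Complex.exp_add]; congr 1; push_cast; ring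

lemma qp_intN (N : ℕ) (hN : N ≠ 0) (t : ℤ) : qp N ((N : ℚ) * t) = 1 := by
  have hNC : (N : ℂ) ≠ 0 := Nat.cast_ne_zero.mpr hN
  rw [qp, show 2 * (Real.pi : ℂ) * Complex.I * (((N : ℚ) * t : ℚ) : ℂ) / (N : ℂ)
      = (t : ℤ) * (2 * (Real.pi : ℂ) * Complex.I) from by push_cast; field_simp]
  exact Complex.exp_int_mul_two_pi_mul_I t

lemma qp_shift (N : ℕ) (hN : N ≠ 0) (A B : ℚ) (T : ℤ) (h : A = B + N * T) :
    qp N A = qp N B := by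
  rw [h, qp_add, qp_intN N hN, mul_one]

lemma key_invariance (n K a : ℕ) (mu : Fin n → ℤ)
    (x c : Fin n → ℚ) (lam eps : Fin n → ℤ)
    (hx : ∀ j, x j = lam j) (hc : ∀ j, c j = ((K : ℚ)) * eps j)
    (heps : ∀ j, eps j = 0 ∨ eps j = 1) (hKa : K = 2 * a + 1) :
    qp (2 * K) (dotp (x + c) (x + c)) * Sprime n (2 * K) (x + c) (intC mu)
      = qp (2 * K) (dotp x x) * Sprime n (2 * K) x (intC mu) := by
  subst hKa
  set N : ℕ := 2 * (2 * a + 1) with hN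
  have hN0 : N ≠ 0 := by omega
  unfold Sprime
  rw [Finset.mul_sum, Finset.mul_sum]
  refine Finset.sum_congr rfl fun σ _ => ?_
  set v : Fin n → ℚ := Wact σ (intC mu + rhoV n) with hv
  have main : qp N (dotp (x + c) (x + c) + 2 * dotp (x + c + rhoV n) v)
      = qp N (dotp x x + 2 * dotp (x + rhoV n) v) := by
    have hco : ∀ j : Fin n, ∃ tj : ℤ,
        (x j + c j) * (x j + c j) + 2 * ((x j + c j + rhoV n j) * v j)
          = x j * x j + 2 * ((x j + rhoV n j) * v j) + (N : ℚ) * tj := by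
      intro j
      set l : Fin n := σ.1⁻¹ j with hl
      have hvj : v j = ((σ.2 j : ℤ) : ℚ) * ((mu l : ℚ) + ((n : ℚ) - ((l : ℕ) : ℚ) - 1/2)) := by
        simp [hv, Wact, intC, rhoV, Pi.add_apply, ← hl]
      have hρ : rhoV n j = (n : ℚ) - ((j : ℕ) : ℚ) - 1/2 := rfl
      rcases heps j with he | he
      · refine ⟨0, ?_⟩
        rw [hc j, he]
        push_cast
        ring
      · rcases Int.units_eq_one_or (σ.2 j) with hs | hs
        · refine ⟨lam j + a + mu l + (n : ℤ) - ((l : ℕ) : ℤ), ?_⟩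
          rw [hx j, hc j, he, hρ, hvj, hs]
          push_cast [hN]
          ring
        · refine ⟨lam j + a + 1 - mu l - (n : ℤ) + ((l : ℕ) : ℤ), ?_⟩
          rw [hx j, hc j, he, hρ, hvj, hs]
          push_cast [hN]
          ring
    choose t ht using hco
    refine qp_shift N hN0 _ _ (∑ j, t j) ?_
    have e1 : dotp (x + c) (x + c) + 2 * dotp (x + c + rhoV n) v
        = ∑ j, ((x j + c j) * (x j + c j) + 2 * ((x j + c j + rhoV n j) * v j)) := by
      simp [dotp, Pi.add_apply, Finset.mul_sum, Finset.sum_add_distrib]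
    have e2 : dotp x x + 2 * dotp (x + rhoV n) v
        = ∑ j, (x j * x j + 2 * ((x j + rhoV n j) * v j)) := by
      simp [dotp, Pi.add_apply, Finset.mul_sum, Finset.sum_add_distrib]
    rw [e1, e2]
    rw [Finset.sum_congr rfl fun j _ => ht j]
    rw [Finset.sum_add_distrib, ← Finset.mul_sum]
    push_cast
    ring
  rw [qp_add, qp_add] at main
  calc qp N (dotp (x + c) (x + c)) *
        (((epsW σ : ℤ) : ℂ) * qp N (2 * dotp (x + c + rhoV n) v))
      = ((epsW σ : ℤ) : ℂ) *
        (qp N (dotp (x + c) (x + c)) * qp N (2 * dotp (x + c + rhoV n) v)) := by ring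
    _ = ((epsW σ : ℤ) : ℂ) *
        (qp N (dotp x x) * qp N (2 * dotp (x + rhoV n) v)) := by rw [main]
    _ = qp N (dotp x x) * (((epsW σ : ℤ) : ℂ) * qp N (2 * dotp (x + rhoV n) v)) := by ring

/-- For `n ≥ 1`, `N ≡ 2 (mod 4)` with `N ≥ 6`, and `μ ∈ ℤ^n`,
`Σ_{λ∈X_N} q^{(λ,λ)} S'_{λ,μ} = 2^n · Σ_{λ∈X_{N/2}} q^{(λ,λ)} S'_{λ,μ}`
(with `q^r = exp(2πi r/N)` throughout). -/
theorem sumXS_halving (n N : ℕ) (hn : 1 ≤ n) (hN : 6 ≤ N) (hN4 : N % 4 = 2)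
    (mu : Fin n → ℤ) :
    sumXS n N N mu = 2 ^ n * sumXS n N (N / 2) mu := by
  obtain ⟨K, hNK⟩ : ∃ K, N = 2 * K := ⟨N / 2, by omega⟩
  subst hNK
  obtain ⟨a, hKa⟩ : ∃ a, K = 2 * a + 1 := ⟨K / 2, by omega⟩
  have h2 : 2 * K / 2 = K := by omega
  rw [h2]
  unfold sumXS
  set G : (Fin n → Fin (2 * K)) → ℂ := fun lam =>
    qp (2 * K) (dotp (finC lam) (finC lam)) * Sprime n (2 * K) (finC lam) (intC mu) with hG
  have hK0 : 0 < K := by omega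
  let E : (Fin n → Fin 2 × Fin K) ≃ (Fin n → Fin (2 * K)) :=
    Equiv.piCongrRight (fun _ => finProdFinEquiv)
  let A : ((Fin n → Fin 2) × (Fin n → Fin K)) ≃ (Fin n → Fin 2 × Fin K) :=
    (Equiv.arrowProdEquivProdArrow (Fin n) (fun _ => Fin 2) (fun _ => Fin K)).symm
  have step1 : ∑ lam : Fin n → Fin (2 * K), G lam
      = ∑ p : ((Fin n → Fin 2) × (Fin n → Fin K)), G (E (A p)) := by
    rw [Equiv.sum_comp A (fun p => G (E p)), Equiv.sum_comp E G]
  rw [step1, Fintype.sum_prod_type]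
  have hEA : ∀ (ε : Fin n → Fin 2) (l : Fin n → Fin K),
      finC (E (A (ε, l))) = finC l + (fun j => (K : ℚ) * ((ε j : ℕ) : ℚ)) := by
    intro ε l
    funext j
    simp only [finC, E, A, Equiv.piCongrRight, Equiv.arrowProdEquivProdArrow,
      finProdFinEquiv, Equiv.coe_fn_mk, Equiv.coe_fn_symm_mk, Pi.add_apply, Pi.map_apply]
    push_cast
    ring
  have inner : ∀ ε : Fin n → Fin 2,
      ∑ l : Fin n → Fin K, G (E (A (ε, l))) = ∑ l : Fin n → Fin K, qp (2 * K) (dotp (finC l) (finC l)) * Sprime n (2 * K) (finC l) (intC mu) := by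
    intro ε
    refine Finset.sum_congr rfl fun l _ => ?_
    show qp (2 * K) (dotp (finC (E (A (ε, l)))) (finC (E (A (ε, l))))) *
        Sprime n (2 * K) (finC (E (A (ε, l)))) (intC mu) = _
    rw [hEA ε l]
    exact key_invariance n K a mu (finC l) (fun j => (K : ℚ) * ((ε j : ℕ) : ℚ))
      (fun j => ((l j : ℕ) : ℤ)) (fun j => ((ε j : ℕ) : ℤ))
      (fun j => by simp [finC]) (fun j => by push_cast; ring)
      (fun j => by have := (ε j).isLt; show ((ε j : ℕ) : ℤ) = 0 ∨ ((ε j : ℕ) : ℤ) = 1; omega) hKa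
  rw [Finset.sum_congr rfl fun ε _ => inner ε]
  rw [Finset.sum_const, Finset.card_univ]
  simp [nsmul_eq_mul]
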